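/- Let H be a real Hilbert space, F : H → H a continuous monotone operator, and f_δ ∈ H with ‖F(0) − f_δ‖ > 0. Let a(t) = d/(c+t)^b and φ(t) = ∫₀ᵗ a(s)²/2 ds, where d, c > 0, b ∈ (0, 1/4] and c^{1−2b} d² ≥ 6b. For each t ≥ 0 let V_δ(t) be the unique solution of F(V) + a(t)V = f_δ. Then for every t ≥ 0: e^{−φ(t)} ∫₀ᵗ e^{φ(s)} |a′(s)| ‖V_δ(s)‖ ds ≤ (1/2) a(t) ‖V_δ(t)‖. -/

import Mathlib

open Filter Topology Set intervalIntegral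
open scoped RealInnerProductSpace

/-- Let `H` be a real Hilbert space, `F : H → H` a continuous monotone
operator, and `f_δ ∈ H` with `‖F 0 - f_δ‖ > 0`.  Let `a(t) = d/(c+t)^b` and
`φ(t) = ∫₀ᵗ a(s)²/2 ds`, where `d, c > 0`, `b ∈ (0, 1/4]` and `c^{1-2b} d² ≥ 6b`.
For each `t ≥ 0` let `V_δ(t)` be the unique solution of `F(V) + a(t)V = f_δ`.  Then for
every `t ≥ 0`:
`e^{-φ(t)} ∫₀ᵗ e^{φ(s)} |a′(s)| ‖V_δ(s)‖ ds ≤ (1/2) a(t) ‖V_δ(t)‖`. -/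
theorem dsm_weighted_integral_of_Vdelta_bound
    {H : Type*} [NormedAddCommGroup H] [InnerProductSpace ℝ H] [CompleteSpace H]
    (F : H → H) (hFcont : Continuous F)
    (hFmono : ∀ u v : H, 0 ≤ ⟪F u - F v, u - v⟫)
    (fδ : H) (hfδ : 0 < ‖F 0 - fδ‖)
    (b c d : ℝ) (hb : 0 < b) (hb4 : b ≤ 1 / 4) (hc : 0 < c) (hd : 0 < d)
    (hcd : 6 * b ≤ c ^ (1 - 2 * b) * d ^ 2)
    (a φ : ℝ → ℝ) (ha : ∀ t : ℝ, a t = d / (c + t) ^ b)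
    (hφ : ∀ t : ℝ, φ t = ∫ s in (0 : ℝ)..t, a s ^ 2 / 2)
    (Vδ : ℝ → H) (hVδ : ∀ t ∈ Ici (0 : ℝ), F (Vδ t) + a t • Vδ t = fδ) :
    ∀ t ∈ Ici (0 : ℝ),
      Real.exp (-φ t) * ∫ s in (0 : ℝ)..t, Real.exp (φ s) * |deriv a s| * ‖Vδ s‖
        ≤ 1 / 2 * a t * ‖Vδ t‖ := by
  -- basic positivity
  have hu : ∀ s : ℝ, 0 ≤ s → 0 < c + s := fun s hs => by linarith
  have hupos : ∀ s : ℝ, 0 ≤ s → (0:ℝ) < (c + s) ^ b :=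
    fun s hs => Real.rpow_pos_of_pos (hu s hs) b
  have hapos : ∀ s : ℝ, 0 ≤ s → 0 < a s := fun s hs => by
    rw [ha]; exact div_pos hd (hupos s hs)
  -- a is strictly decreasing on [0, ∞)
  have haanti : ∀ s₁ s₂ : ℝ, 0 ≤ s₁ → s₁ < s₂ → a s₂ < a s₁ := by
    intro s₁ s₂ h1 h12
    rw [ha, ha]
    apply div_lt_div_of_pos_left hd (hupos s₁ h1)
    exact Real.rpow_lt_rpow (le_of_lt (hu s₁ h1)) (by linarith) hb
  -- norm of Vδ is monotone
  have hVmono : ∀ s₁ s₂ : ℝ, 0 ≤ s₁ → s₁ ≤ s₂ → ‖Vδ s₁‖ ≤ ‖Vδ s₂‖ := by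
    intro s₁ s₂ h1 h12
    rcases eq_or_lt_of_le h12 with rfl | hlt
    · exact le_refl _
    · have ha12 : a s₂ < a s₁ := haanti s₁ s₂ h1 hlt
      have ha2 : 0 < a s₂ := hapos s₂ (le_trans h1 h12)
      have e1 := hVδ s₁ (mem_Ici.2 h1)
      have e2 := hVδ s₂ (mem_Ici.2 (le_trans h1 h12))
      have hdiff : F (Vδ s₁) - F (Vδ s₂) = a s₂ • Vδ s₂ - a s₁ • Vδ s₁ := by
        rw [sub_eq_sub_iff_add_eq_add]
        rw [e1, add_comm]
        rw [e2]
      have hm := hFmono (Vδ s₁) (Vδ s₂)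
      rw [hdiff] at hm
      have hexp : (inner ℝ (a s₂ • Vδ s₂ - a s₁ • Vδ s₁) (Vδ s₁ - Vδ s₂) : ℝ)
          = a s₂ * (inner ℝ (Vδ s₁) (Vδ s₂) : ℝ) - a s₂ * ‖Vδ s₂‖ ^ 2
            - a s₁ * ‖Vδ s₁‖ ^ 2 + a s₁ * (inner ℝ (Vδ s₁) (Vδ s₂) : ℝ) := by
        simp [inner_sub_left, inner_sub_right, real_inner_smul_left,
          real_inner_self_eq_norm_sq, real_inner_comm (Vδ s₂) (Vδ s₁)]
        ring
      rw [hexp] at hm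
      have hC := real_inner_le_norm (Vδ s₁) (Vδ s₂)
      by_contra hcon
      push_neg at hcon
      have hn1 : 0 < ‖Vδ s₁‖ := lt_of_le_of_lt (norm_nonneg _) hcon
      have hk : a s₂ * ‖Vδ s₂‖ < a s₁ * ‖Vδ s₁‖ := by nlinarith [norm_nonneg (Vδ s₂)]
      nlinarith [mul_pos (sub_pos.2 hcon) (sub_pos.2 hk), norm_nonneg (Vδ s₂)]

  -- ------- calculus part -------
  have hu2 : ∀ s : ℝ, -c < s → 0 < c + s := fun s hs => by linarith
  -- derivative of a
  have haD : ∀ s : ℝ, -c < s → HasDerivAt a (-(d * b * (c + s) ^ (-b - 1))) s := by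
    intro s hs
    have h1 : HasDerivAt (fun y : ℝ => c + y) 1 s := by
      simpa using (hasDerivAt_id s).const_add c
    have h2 : HasDerivAt (fun y : ℝ => (c + y) ^ b) (1 * b * (c + s) ^ (b - 1)) s :=
      h1.rpow_const (Or.inl (hu2 s hs).ne')
    have h3 := (hasDerivAt_const s d).div h2 (Real.rpow_pos_of_pos (hu2 s hs) b).ne'
    have hfun : a = fun y : ℝ => d / (c + y) ^ b := funext ha
    rw [hfun]
    convert h3 using 1
    rfl
    rfl
    rfl
    have e : (c + s) ^ (b - 1) = (c + s) ^ (-b - 1) * ((c + s) ^ b * (c + s) ^ b) := by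
      rw [← Real.rpow_add (hu2 s hs), ← Real.rpow_add (hu2 s hs)]
      congr 1; ring
    rw [e, eq_div_iff (pow_ne_zero 2 (Real.rpow_pos_of_pos (hu2 s hs) b).ne')]; ring
  have hwpos : ∀ s : ℝ, -c < s → 0 < d * b * (c + s) ^ (-b - 1) := fun s hs =>
    mul_pos (mul_pos hd hb) (Real.rpow_pos_of_pos (hu2 s hs) _)
  have hderivabs : ∀ s : ℝ, -c < s → |deriv a s| = d * b * (c + s) ^ (-b - 1) := by
    intro s hs
    rw [(haD s hs).deriv, abs_neg, abs_of_pos (hwpos s hs)]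
  have hacont : ∀ s : ℝ, -c < s → ContinuousAt a s := fun s hs => (haD s hs).continuousAt
  -- derivative of φ
  have hintcont : ∀ s : ℝ, -c < s → ContinuousAt (fun x => a x ^ 2 / 2) s := fun s hs =>
    ((hacont s hs).pow 2).div_const 2
  have hφD : ∀ s : ℝ, 0 ≤ s → HasDerivAt φ (a s ^ 2 / 2) s := by
    intro s hs
    have hs' : -c < s := by linarith
    have hii : IntervalIntegrable (fun x => a x ^ 2 / 2) MeasureTheory.volume 0 s := by
      apply ContinuousOn.intervalIntegrable
      intro x hx
      have : -c < x := by
        rcases mem_uIcc.1 hx with h | h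
        · linarith [h.1]
        · linarith [h.1]
      exact (hintcont x this).continuousWithinAt
    have hsm : StronglyMeasurableAtFilter (fun x => a x ^ 2 / 2) (nhds s) MeasureTheory.volume :=
      ContinuousAt.stronglyMeasurableAtFilter isOpen_Ioi
        (fun x hx => hintcont x hx) s hs'
    have hfun : φ = fun y : ℝ => ∫ x in (0:ℝ)..y, a x ^ 2 / 2 := funext hφ
    rw [hfun]
    exact intervalIntegral.integral_hasDerivAt_right hii hsm (hintcont s hs')
  intro t ht
  simp only [mem_Ici] at ht
  -- the auxiliary function g and its derivative
  set g : ℝ → ℝ := fun s => Real.exp (φ s) * (a s / 2) with hg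
  set g' : ℝ → ℝ := fun s =>
    Real.exp (φ s) * (a s ^ 2 / 2) * (a s / 2)
      + Real.exp (φ s) * (-(d * b * (c + s) ^ (-b - 1)) / 2) with hg'
  have hgD : ∀ s : ℝ, 0 ≤ s → HasDerivAt g (g' s) s := by
    intro s hs
    exact ((hφD s hs).exp).mul ((haD s (by linarith)).div_const 2)
  -- continuity of the majorant and of g'
  have hwcont : ∀ s : ℝ, -c < s → ContinuousAt (fun x => (c + x) ^ (-b - 1)) s := by
    intro s hs
    exact ((continuous_const.add continuous_id).continuousAt).rpow_const
      (Or.inl (hu2 s hs).ne')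
  have hφcont : ∀ s : ℝ, 0 ≤ s → ContinuousAt φ s := fun s hs => (hφD s hs).continuousAt
  set E : ℝ → ℝ := fun s => Real.exp (φ s) * (d * b * (c + s) ^ (-b - 1)) with hE
  have hEcont : ∀ s ∈ Icc (0:ℝ) t, ContinuousAt E s := by
    intro s hs
    exact ((Real.continuous_exp.continuousAt.comp (hφcont s hs.1))).mul
      (continuousAt_const.mul (hwcont s (by linarith [hs.1])))
  have hEint : IntervalIntegrable E MeasureTheory.volume 0 t := by
    apply ContinuousOn.intervalIntegrable
    rw [uIcc_of_le ht]
    exact fun x hx => (hEcont x hx).continuousWithinAt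
  have hg'int : IntervalIntegrable g' MeasureTheory.volume 0 t := by
    apply ContinuousOn.intervalIntegrable
    rw [uIcc_of_le ht]
    intro x hx
    have hx' : -c < x := by linarith [hx.1]
    exact (((Real.continuous_exp.continuousAt.comp (hφcont x hx.1)).mul
      (((hacont x hx').pow 2).div_const 2)).mul ((hacont x hx').div_const 2)).add
      ((Real.continuous_exp.continuousAt.comp (hφcont x hx.1)).mul
        (((continuousAt_const.mul (hwcont x hx')).neg).div_const 2))
      |>.continuousWithinAt
  -- key inequality  6 * w ≤ a^3
  have hkey : ∀ s ∈ Icc (0:ℝ) t, 6 * (d * b * (c + s) ^ (-b - 1)) ≤ a s ^ 3 := by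
    intro s hs
    have hs0 : (0:ℝ) ≤ s := hs.1
    have hcs : 0 < c + s := by linarith
    have h1 : c ^ (1 - 2 * b) ≤ (c + s) ^ (1 - 2 * b) :=
      Real.rpow_le_rpow hc.le (by linarith) (by linarith)
    have h2 : 6 * b ≤ (c + s) ^ (1 - 2 * b) * d ^ 2 :=
      le_trans hcd (mul_le_mul_of_nonneg_right h1 (sq_nonneg d))
    have hBA : (c + s) ^ (1 - 2 * b) * (c + s) ^ (-b - 1) = (c + s) ^ (-(3 * b)) := by
      rw [← Real.rpow_add hcs]; congr 1; ring
    have e3 : a s ^ 3 = d ^ 3 * (c + s) ^ (-(3 * b)) := by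
      rw [ha, div_pow, ← Real.rpow_natCast ((c + s) ^ b) 3, ← Real.rpow_mul hcs.le]
      rw [div_eq_mul_inv, ← Real.rpow_neg hcs.le]
      congr 1
      push_cast
      ring
    rw [e3, ← hBA]
    have hA : 0 < (c + s) ^ (-b - 1) := Real.rpow_pos_of_pos hcs _
    nlinarith [mul_le_mul_of_nonneg_right h2 (mul_nonneg hd.le hA.le)]
  -- pointwise comparison E ≤ g'
  have hpt : ∀ s ∈ Icc (0:ℝ) t, E s ≤ g' s := by
    intro s hs
    have hk := hkey s hs
    have hex := Real.exp_pos (φ s)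
    simp only [hE, hg']
    nlinarith [mul_le_mul_of_nonneg_left hk hex.le]
  -- integral of E is bounded
  have hEbound : (∫ s in (0:ℝ)..t, E s) ≤ Real.exp (φ t) * (a t / 2) := by
    have h1 : (∫ s in (0:ℝ)..t, E s) ≤ ∫ s in (0:ℝ)..t, g' s :=
      intervalIntegral.integral_mono_on ht hEint hg'int hpt
    have h2 : (∫ s in (0:ℝ)..t, g' s) = g t - g 0 := by
      apply intervalIntegral.integral_eq_sub_of_hasDerivAt _ hg'int
      intro x hx
      rw [uIcc_of_le ht] at hx
      exact hgD x hx.1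
    have h3 : 0 ≤ g 0 := by
      have := hapos 0 le_rfl
      positivity
    calc (∫ s in (0:ℝ)..t, E s) ≤ g t - g 0 := h1.trans h2.le
      _ ≤ g t := by linarith
  -- conclude
  by_cases hJ : IntervalIntegrable (fun s => Real.exp (φ s) * |deriv a s| * ‖Vδ s‖)
      MeasureTheory.volume 0 t
  · have hmaj : IntervalIntegrable (fun s => E s * ‖Vδ t‖) MeasureTheory.volume 0 t :=
      hEint.mul_const _
    have step1 : (∫ s in (0:ℝ)..t, Real.exp (φ s) * |deriv a s| * ‖Vδ s‖)
        ≤ ∫ s in (0:ℝ)..t, E s * ‖Vδ t‖ := by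
      apply intervalIntegral.integral_mono_on ht hJ hmaj
      intro x hx
      have hx' : -c < x := by linarith [hx.1]
      rw [hderivabs x hx']
      exact mul_le_mul_of_nonneg_left (hVmono x t hx.1 hx.2)
        (mul_nonneg (Real.exp_pos _).le (hwpos x hx').le)
    have step2 : (∫ s in (0:ℝ)..t, E s * ‖Vδ t‖) = (∫ s in (0:ℝ)..t, E s) * ‖Vδ t‖ :=
      intervalIntegral.integral_mul_const _ _
    have step3 : (∫ s in (0:ℝ)..t, Real.exp (φ s) * |deriv a s| * ‖Vδ s‖)
        ≤ Real.exp (φ t) * (a t / 2) * ‖Vδ t‖ := by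
      rw [step2] at step1
      exact step1.trans (mul_le_mul_of_nonneg_right hEbound (norm_nonneg _))
    calc Real.exp (-φ t) * ∫ s in (0:ℝ)..t, Real.exp (φ s) * |deriv a s| * ‖Vδ s‖
        ≤ Real.exp (-φ t) * (Real.exp (φ t) * (a t / 2) * ‖Vδ t‖) :=
          mul_le_mul_of_nonneg_left step3 (Real.exp_pos _).le
      _ = 1 / 2 * a t * ‖Vδ t‖ := by
          rw [Real.exp_neg]
          field_simp
  · rw [intervalIntegral.integral_undef hJ, mul_zero]
    have := hapos t ht
    positivity
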